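/- Let n, p ∈ ℕ, κ = 0, and enumerate I(n,p) = {ξ ∈ ℕ₀^n : |ξ|_1 ≤ p} so that elements are ordered by decreasing number of zero coordinates, grouped by their zero-coordinate sets. Then the matrix K with entries K_{ij} = 2^{n-λ(η_j,0)} η_j^{2ξ_i} (where λ(η,0) counts zero coordinates of η) is block upper-triangular with diagonal blocks 2^{n-k} A_k, where A_k is the matrix generated by {ξ ∈ I(n,p) : λ(ξ,0) = k}; moreover each A_k with 0 < k < n is block diagonal with blocks equal (up to canonical coordinate projection) to the matrix generated by I⁺(n-k, p). Consequently det K = C · ∏_{k=1}^n (det D_k)^{C(n,k)} for a nonzero constant C, where D_k is the matrix generated by I⁺(k,p). -/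

import Mathlib

/-- The set I(n,p) of multi-indices ξ ∈ ℕ₀^n with coordinate sum at most p. -/
def Inp (n p : ℕ) : Finset (Fin n → ℕ) :=
  (Finset.range (p + 1)).biUnion (fun m => Finset.Nat.antidiagonalTuple n m)

/-- The set I⁺(m,p) of vectors in ℕ^m with strictly positive coordinates and
coordinate sum at most p. -/
def Iplus (m p : ℕ) : Finset (Fin m → ℕ) :=
  ((Finset.range (p + 1)).biUnion (fun q => Finset.Nat.antidiagonalTuple m q)).filter
    (fun ξ => ∀ i, 1 ≤ ξ i)

/-- The coefficient matrix K for κ = 0: K_{ξη} = 2^{n-λ(η,0)} η^{2ξ}. -/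
noncomputable def Kmat (n p : ℕ) : Matrix ↥(Inp n p) ↥(Inp n p) ℚ :=
  fun ξ η =>
    2 ^ (n - (Finset.univ.filter (fun l => (η : Fin n → ℕ) l = 0)).card) *
      ∏ l, ((η : Fin n → ℕ) l : ℚ) ^ (2 * (ξ : Fin n → ℕ) l)

/-- The matrix D_k generated by I⁺(k,p): D_{ξη} = η^{2ξ}. -/
noncomputable def Dmat (k p : ℕ) : Matrix ↥(Iplus k p) ↥(Iplus k p) ℚ :=
  fun ξ η => ∏ l, ((η : Fin k → ℕ) l : ℚ) ^ (2 * (ξ : Fin k → ℕ) l)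

open Finset

lemma mem_Inp {n p : ℕ} {ξ : Fin n → ℕ} : ξ ∈ Inp n p ↔ ∑ i, ξ i ≤ p := by
  simp only [Inp, Finset.mem_biUnion, Finset.mem_range, Nat.lt_succ_iff,
    Finset.Nat.mem_antidiagonalTuple]
  constructor
  · rintro ⟨m, hm, rfl⟩; exact hm
  · intro h; exact ⟨∑ i, ξ i, h, rfl⟩

lemma mem_Iplus {k p : ℕ} {ξ : Fin k → ℕ} :
    ξ ∈ Iplus k p ↔ (∑ i, ξ i ≤ p ∧ ∀ i, 1 ≤ ξ i) := by
  simp only [Iplus, Finset.mem_filter, Finset.mem_biUnion, Finset.mem_range, Nat.lt_succ_iff,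
    Finset.Nat.mem_antidiagonalTuple]
  constructor
  · rintro ⟨⟨m, hm, rfl⟩, h2⟩; exact ⟨hm, h2⟩
  · rintro ⟨h1, h2⟩; exact ⟨⟨∑ i, ξ i, h1, rfl⟩, h2⟩

/-- The support of a multi-index. -/
def suppF {n : ℕ} (ξ : Fin n → ℕ) : Finset (Fin n) :=
  Finset.univ.filter (fun l => ξ l ≠ 0)

/-- Binary encoding of a finite set. -/
def encodeS {n : ℕ} (S : Finset (Fin n)) : ℕ := ∑ l ∈ S, 2 ^ (l : ℕ)

lemma encodeS_injective {n : ℕ} : Function.Injective (encodeS (n := n)) := by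
  intro S T h
  have himg : S.image Fin.val = T.image Fin.val := by
    apply Finset.geomSum_injective (le_refl 2)
    simp only [Finset.sum_image (fun a _ b _ hab => Fin.val_injective hab)]
    exact h
  exact Finset.image_injective Fin.val_injective himg

lemma encodeS_mono {n : ℕ} {S T : Finset (Fin n)} (h : S ⊆ T) : encodeS S ≤ encodeS T :=
  Finset.sum_le_sum_of_subset h

lemma kmat_blockTriangular (n p : ℕ) :
    (Kmat n p).BlockTriangular (fun ξ => encodeS (suppF (ξ : Fin n → ℕ))) := by
  intro ξ η hlt
  have hns : ¬ suppF (ξ : Fin n → ℕ) ⊆ suppF (η : Fin n → ℕ) := by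
    intro hsub
    exact absurd (encodeS_mono hsub) (not_le.2 hlt)
  obtain ⟨l, hlξ, hlη⟩ := Finset.not_subset.1 hns
  simp only [suppF, Finset.mem_filter, Finset.mem_univ, true_and, ne_eq, not_not] at hlξ hlη
  unfold Kmat
  rw [Finset.prod_eq_zero (Finset.mem_univ l), mul_zero]
  rw [hlη]
  push_cast
  exact zero_pow (by omega)

lemma Iplus_eq_empty {k p : ℕ} (h : p < k) : Iplus k p = ∅ := by
  rw [Finset.eq_empty_iff_forall_notMem]
  intro ξ hξ
  rw [mem_Iplus] at hξ
  have : k ≤ ∑ i, ξ i := by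
    calc k = ∑ _i : Fin k, 1 := by simp
    _ ≤ ∑ i, ξ i := Finset.sum_le_sum (fun i _ => hξ.2 i)
  omega

lemma card_supp_le {n p : ℕ} {ξ : Fin n → ℕ} (h : ξ ∈ Inp n p) : (suppF ξ).card ≤ p := by
  have h1 : (suppF ξ).card = ∑ l ∈ suppF ξ, 1 := by simp
  have h2 : ∑ l ∈ suppF ξ, 1 ≤ ∑ l ∈ suppF ξ, ξ l := by
    apply Finset.sum_le_sum
    intro i hi
    simp only [suppF, Finset.mem_filter] at hi
    omega
  have h3 : ∑ l ∈ suppF ξ, ξ l ≤ ∑ l, ξ l :=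
    Finset.sum_le_sum_of_subset (Finset.subset_univ _)
  rw [mem_Inp] at h
  omega

lemma zero_count_eq {n : ℕ} (η : Fin n → ℕ) :
    (Finset.univ.filter (fun l => η l = 0)).card = n - (suppF η).card := by
  have : Finset.univ.filter (fun l => η l = 0) = (suppF η)ᶜ := by
    ext l; simp [suppF]
  rw [this, Finset.card_compl, Fintype.card_fin]

/-- The diagonal-block determinant identity. -/
lemma block_det (n p : ℕ) (S : Finset (Fin n)) (hS : S.card ≤ p) :
    ((Kmat n p).toSquareBlock (fun ξ => encodeS (suppF (ξ : Fin n → ℕ))) (encodeS S)).det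
      = 2 ^ (S.card * (Iplus S.card p).card) * (Dmat S.card p).det := by
  classical
  set k := S.card with hk
  set oif : Fin k ≃o ↥S := S.orderIsoOfFin hk.symm with hoif
  -- the index type of the block
  set B := {η : ↥(Inp n p) // encodeS (suppF (η : Fin n → ℕ)) = encodeS S} with hB
  have hsupp : ∀ η : B, suppF ((η : ↥(Inp n p)) : Fin n → ℕ) = S := fun η =>
    encodeS_injective η.2
  -- forward map
  have hto : ∀ η : B, (fun i : Fin k => ((η : ↥(Inp n p)) : Fin n → ℕ) (oif i)) ∈ Iplus k p := by
    intro η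
    rw [mem_Iplus]
    constructor
    · have e1 : ∑ i : Fin k, ((η : ↥(Inp n p)) : Fin n → ℕ) (oif i)
          = ∑ x : ↥S, ((η : ↥(Inp n p)) : Fin n → ℕ) x :=
        Fintype.sum_equiv oif.toEquiv _ _ (fun i => rfl)
      have e2 : ∑ x : ↥S, ((η : ↥(Inp n p)) : Fin n → ℕ) x
          = ∑ l ∈ S, ((η : ↥(Inp n p)) : Fin n → ℕ) l := Finset.sum_coe_sort _ _
      have e3 : ∑ l ∈ S, ((η : ↥(Inp n p)) : Fin n → ℕ) l
          ≤ ∑ l, ((η : ↥(Inp n p)) : Fin n → ℕ) l :=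
        Finset.sum_le_sum_of_subset (Finset.subset_univ _)
      have e4 := mem_Inp.1 (η : ↥(Inp n p)).2
      omega
    · intro i
      have : ((oif i : ↥S) : Fin n) ∈ suppF ((η : ↥(Inp n p)) : Fin n → ℕ) := by
        rw [hsupp η]; exact (oif i).2
      simp only [suppF, Finset.mem_filter] at this
      omega
  -- backward map
  set ofIp : (Fin k → ℕ) → (Fin n → ℕ) :=
    fun ζ l => if h : l ∈ S then ζ (oif.symm ⟨l, h⟩) else 0 with hofIp
  have hsum_ofIp : ∀ ζ : Fin k → ℕ, ∑ l, ofIp ζ l = ∑ i, ζ i := by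
    intro ζ
    have e1 : ∑ l, ofIp ζ l = ∑ l ∈ S, ofIp ζ l := by
      symm
      apply Finset.sum_subset (Finset.subset_univ S)
      intro x _ hx
      simp [hofIp, hx]
    have e2 : ∑ l ∈ S, ofIp ζ l = ∑ x : ↥S, ofIp ζ x := (Finset.sum_coe_sort _ _).symm
    have e3 : ∑ x : ↥S, ofIp ζ x = ∑ i : Fin k, ofIp ζ (oif i) :=
      (Fintype.sum_equiv oif.toEquiv _ _ (fun i => rfl)).symm
    have e4 : ∀ i : Fin k, ofIp ζ (oif i) = ζ i := by
      intro i
      simp only [hofIp]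
      rw [dif_pos (oif i).2]
      congr 1
      simp
    rw [e1, e2, e3]
    exact Finset.sum_congr rfl (fun i _ => e4 i)
  have hsupp_ofIp : ∀ ζ : Fin k → ℕ, (∀ i, 1 ≤ ζ i) → suppF (ofIp ζ) = S := by
    intro ζ hζ
    ext l
    simp only [suppF, Finset.mem_filter, Finset.mem_univ, true_and, ne_eq]
    constructor
    · intro h
      by_contra hl
      simp [hofIp, hl] at h
    · intro hl
      simp only [hofIp]
      rw [dif_pos hl]
      have := hζ (oif.symm ⟨l, hl⟩)
      omega
  have hmem_ofIp : ∀ ζ : Fin k → ℕ, ζ ∈ Iplus k p → ofIp ζ ∈ Inp n p := by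
    intro ζ hζ
    rw [mem_Inp, hsum_ofIp]
    exact (mem_Iplus.1 hζ).1
  -- the equivalence
  set e : B ≃ ↥(Iplus k p) :=
    { toFun := fun η => ⟨fun i => ((η : ↥(Inp n p)) : Fin n → ℕ) (oif i), hto η⟩
      invFun := fun ζ => ⟨⟨ofIp ζ, hmem_ofIp ζ ζ.2⟩, by
        rw [hsupp_ofIp ζ (fun i => (mem_Iplus.1 ζ.2).2 i)]⟩
      left_inv := by
        intro η
        apply Subtype.ext
        apply Subtype.ext
        funext l
        by_cases hl : l ∈ S
        · simp only [hofIp]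
          rw [dif_pos hl]
          congr 1
          simp
        · simp only [hofIp]
          rw [dif_neg hl]
          have : l ∉ suppF ((η : ↥(Inp n p)) : Fin n → ℕ) := by rw [hsupp η]; exact hl
          simp only [suppF, Finset.mem_filter, Finset.mem_univ, true_and, ne_eq, not_not] at this
          exact this.symm
      right_inv := by
        intro ζ
        apply Subtype.ext
        funext i
        simp only [hofIp]
        rw [dif_pos (oif i).2]
        congr 1
        simp } with he
  -- matrix identity
  have hmat : (Kmat n p).toSquareBlock (fun ξ => encodeS (suppF (ξ : Fin n → ℕ))) (encodeS S)
      = ((2 : ℚ) ^ k) • ((Dmat k p).submatrix e e) := by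
    ext ξ η
    rw [Matrix.toSquareBlock_def]
    show Kmat n p ↑ξ ↑η = _
    unfold Kmat
    rw [zero_count_eq, hsupp η, ← hk]
    have hkn : k ≤ n := hk ▸ le_trans (Finset.card_le_card (Finset.subset_univ S)) (by simp)
    have h2 : n - (n - k) = k := by omega
    rw [h2]
    simp only [Matrix.smul_apply, Matrix.submatrix_apply, smul_eq_mul]
    congr 1
    -- product identity
    unfold Dmat
    have e1 : ∏ l, (((↑↑η : Fin n → ℕ) l : ℚ)) ^ (2 * (↑↑ξ : Fin n → ℕ) l)
        = ∏ l ∈ S, (((↑↑η : Fin n → ℕ) l : ℚ)) ^ (2 * (↑↑ξ : Fin n → ℕ) l) := by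
      symm
      apply Finset.prod_subset (Finset.subset_univ S)
      intro x _ hx
      have : x ∉ suppF ((ξ : ↥(Inp n p)) : Fin n → ℕ) := by rw [hsupp ξ]; exact hx
      simp only [suppF, Finset.mem_filter, Finset.mem_univ, true_and, ne_eq, not_not] at this
      rw [this]
      norm_num
    have e2 : ∏ l ∈ S, (((↑↑η : Fin n → ℕ) l : ℚ)) ^ (2 * (↑↑ξ : Fin n → ℕ) l)
        = ∏ x : ↥S, (((↑↑η : Fin n → ℕ) x : ℚ)) ^ (2 * (↑↑ξ : Fin n → ℕ) x) :=
      (Finset.prod_coe_sort _ _).symm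
    have e3 : ∏ x : ↥S, (((↑↑η : Fin n → ℕ) x : ℚ)) ^ (2 * (↑↑ξ : Fin n → ℕ) x)
        = ∏ i : Fin k, (((↑↑η : Fin n → ℕ) (oif i) : ℚ)) ^ (2 * (↑↑ξ : Fin n → ℕ) (oif i)) :=
      (Fintype.prod_equiv oif.toEquiv _ _ (fun i => rfl)).symm
    rw [e1, e2, e3]
    rfl
  rw [hmat, Matrix.det_smul, Matrix.det_submatrix_equiv_self]
  congr 1
  rw [← pow_mul]
  congr 1
  rw [Fintype.card_congr e, Fintype.card_coe]

/-- Subsets realizable as supports are exactly those of cardinality ≤ p. -/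
lemma mem_image_supp_iff {n p : ℕ} (S : Finset (Fin n)) :
    S ∈ (Finset.univ : Finset ↥(Inp n p)).image
      (fun ξ => suppF ((ξ : ↥(Inp n p)) : Fin n → ℕ)) ↔ S.card ≤ p := by
  constructor
  · rw [Finset.mem_image]
    rintro ⟨η, -, rfl⟩
    exact card_supp_le η.2
  · intro hS
    rw [Finset.mem_image]
    set ind : Fin n → ℕ := fun l => if l ∈ S then 1 else 0 with hind
    have hsum : ∑ l, ind l = S.card := by
      rw [hind]
      simp [Finset.sum_ite_mem]
    have hmem : ind ∈ Inp n p := by rw [mem_Inp, hsum]; exact hS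
    refine ⟨⟨ind, hmem⟩, Finset.mem_univ _, ?_⟩
    ext l
    simp [suppF, hind]

lemma Dmat_zero_det (p : ℕ) : (Dmat 0 p).det = 1 := by
  have hmem : (fun _ : Fin 0 => 0) ∈ Iplus 0 p := by
    rw [mem_Iplus]
    exact ⟨by simp, fun i => i.elim0⟩
  haveI : Unique ↥(Iplus 0 p) :=
    { default := ⟨fun _ => 0, hmem⟩
      uniq := by
        intro a
        apply Subtype.ext
        funext i
        exact i.elim0 }
  rw [Matrix.det_unique]
  unfold Dmat
  simp

/-- Structure theorem for K (κ = 0): there is a nonzero constant C with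
det K = C · ∏_{k=1}^n (det D_k)^{C(n,k)}, where D_k is generated by I⁺(k,p)
(determinants of empty matrices are 1). -/
theorem detK_factorization (n p : ℕ) (hn : 1 ≤ n) (hp : 1 ≤ p) :
    ∃ C : ℚ, C ≠ 0 ∧
      (Kmat n p).det = C * ∏ k ∈ Finset.Icc 1 n, ((Dmat k p).det) ^ (n.choose k) := by
  classical
  set G : Finset (Fin n) → ℚ :=
    fun S => 2 ^ (S.card * (Iplus S.card p).card) * (Dmat S.card p).det with hG
  set g : ℕ → ℚ := fun j => 2 ^ (j * (Iplus j p).card) * (Dmat j p).det with hg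
  have hdet : (Kmat n p).det = ∏ S ∈ Finset.univ.powerset, G S := by
    rw [(kmat_blockTriangular n p).det]
    have himg : (Finset.univ : Finset ↥(Inp n p)).image
          (fun ξ => encodeS (suppF ((ξ : ↥(Inp n p)) : Fin n → ℕ)))
        = ((Finset.univ : Finset ↥(Inp n p)).image
          (fun ξ => suppF ((ξ : ↥(Inp n p)) : Fin n → ℕ))).image encodeS := by
      rw [Finset.image_image]
      rfl
    rw [himg, Finset.prod_image (fun a _ b _ hab => encodeS_injective hab)]
    rw [Finset.prod_congr rfl (fun S hS => block_det n p S
      ((mem_image_supp_iff S).1 hS))]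
    apply Finset.prod_subset
    · intro S _
      exact Finset.mem_powerset.2 (Finset.subset_univ S)
    · intro S _ hS
      rw [mem_image_supp_iff] at hS
      push_neg at hS
      have hempty : Iplus S.card p = ∅ := Iplus_eq_empty hS
      haveI : IsEmpty ↥(Iplus S.card p) := by
        rw [hempty]; exact Finset.isEmpty_coe_sort.2 rfl
      rw [Matrix.det_isEmpty]
      have : (Iplus S.card p).card = 0 := by rw [hempty]; rfl
      rw [this]
      simp
  rw [hdet, Finset.prod_powerset]
  have hcu : (Finset.univ : Finset (Fin n)).card = n := by simp
  rw [hcu]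
  have hinner : ∀ j ∈ Finset.range (n + 1),
      ∏ t ∈ Finset.powersetCard j (Finset.univ : Finset (Fin n)), G t = g j ^ n.choose j := by
    intro j hj
    have : ∀ t ∈ Finset.powersetCard j (Finset.univ : Finset (Fin n)), G t = g j := by
      intro t ht
      have hcard : t.card = j := (Finset.mem_powersetCard.1 ht).2
      subst hcard
      rfl
    rw [Finset.prod_congr rfl this, Finset.prod_const, Finset.card_powersetCard, hcu]
  rw [Finset.prod_congr rfl hinner]
  have hsplit : ∀ j, g j = 2 ^ (j * (Iplus j p).card) * (Dmat j p).det := fun j => rfl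
  have hmulpow : ∀ j, g j ^ n.choose j
      = ((2 : ℚ) ^ (j * (Iplus j p).card)) ^ n.choose j * ((Dmat j p).det) ^ n.choose j := by
    intro j; rw [hsplit, mul_pow]
  rw [Finset.prod_congr rfl (fun j _ => hmulpow j), Finset.prod_mul_distrib]
  set C0 : ℚ := ∏ j ∈ Finset.range (n + 1), ((2 : ℚ) ^ (j * (Iplus j p).card)) ^ n.choose j
    with hC0
  have hC0ne : C0 ≠ 0 := by
    rw [hC0]
    apply Finset.prod_ne_zero_iff.2
    intro j _
    positivity
  -- split off j = 0 from the second product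
  have hrange : Finset.range (n + 1) = insert 0 (Finset.Icc 1 n) := by
    ext j
    simp only [Finset.mem_range, Finset.mem_insert, Finset.mem_Icc]
    omega
  have hzero : ((Dmat 0 p).det) ^ n.choose 0 = 1 := by
    rw [Dmat_zero_det]; simp
  have hprod2 : ∏ j ∈ Finset.range (n + 1), ((Dmat j p).det) ^ n.choose j
      = ∏ j ∈ Finset.Icc 1 n, ((Dmat j p).det) ^ n.choose j := by
    rw [hrange, Finset.prod_insert (by simp), hzero, one_mul]
  rw [hprod2]
  exact ⟨C0, hC0ne, rfl⟩
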